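/- Let m ≥ 2, and let P_1, …, P_m be orthogonal projections of rank l on ℂ^d (l ≤ d) such that (d/(ml)) Σ_{j=1}^m P_j = I. Then for every index i, max_{j ≠ i} ‖P_i P_j P_i‖ ≥ (lm − d)/(d(m−1)). -/

import Mathlib

open Matrix

/-- The operator norm of a complex square matrix (induced by the Euclidean norm). -/
noncomputable def opNorm {n : Type*} [Fintype n] [DecidableEq n] (M : Matrix n n ℂ) : ℝ :=
  ‖Matrix.toEuclideanCLM (𝕜 := ℂ) M‖

set_option synthInstance.maxHeartbeats 1000000 in
set_option maxHeartbeats 1000000 in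
/-- For a uniformly weighted resolution of the identity by rank-`l`
projections on `ℂ^d`, for every `i` the maximum of `‖P_i P_j P_i‖` over `j ≠ i` is at
least `(lm − d)/(d(m−1))`. -/
theorem stmt_9 (d l m : ℕ) (hm : 2 ≤ m) (hld : l ≤ d)
    (P : Fin m → Matrix (Fin d) (Fin d) ℂ)
    (hproj : ∀ j, (P j)ᴴ = P j ∧ P j * P j = P j)
    (hrank : ∀ j, (P j).rank = l)
    (hres : (↑((d : ℝ) / (m * l)) : ℂ) • ∑ j, P j = 1) :
    ∀ i : Fin m, ∃ j : Fin m, j ≠ i ∧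
      ((l : ℝ) * m - d) / (d * ((m : ℝ) - 1)) ≤ opNorm (P i * P j * P i) := by
  intro i
  have hm1 : (2:ℝ) ≤ (m:ℝ) := by exact_mod_cast hm
  have : Nontrivial (Fin m) := Fin.nontrivial_iff_two_le.mpr hm
  obtain ⟨j0, hj0⟩ : ∃ j : Fin m, j ≠ i := exists_ne i
  set c : ℝ := ((l : ℝ) * m - d) / (d * ((m : ℝ) - 1)) with hcdef
  rcases le_or_gt c 0 with hc | hc
  · exact ⟨j0, hj0, hc.trans (norm_nonneg _)⟩
  have hd : (0:ℝ) < d := by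
    by_contra h
    push_neg at h
    have hd0 : (d:ℝ) = 0 := le_antisymm h (Nat.cast_nonneg d)
    rw [hcdef, hd0] at hc
    simp at hc
  have hden : (0:ℝ) < (d:ℝ) * ((m:ℝ) - 1) := mul_pos hd (by linarith)
  have hnum : (0:ℝ) < (l:ℝ) * m - d := by
    have h := mul_pos hc hden
    rwa [hcdef, div_mul_cancel₀ _ (ne_of_gt hden)] at h
  have hl : (0:ℝ) < l := by
    by_contra h
    push_neg at h
    have : (l:ℝ) = 0 := le_antisymm h (Nat.cast_nonneg l)
    rw [this] at hnum
    linarith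
  have hml : (0:ℝ) < (m:ℝ) * l := mul_pos (by linarith) hl
  have hcoef : ((d:ℝ) / ((m:ℝ) * l)) ≠ 0 := ne_of_gt (div_pos hd hml)
  have hcoefC : ((((d:ℝ) / ((m:ℝ) * l)) : ℝ) : ℂ) ≠ 0 := by exact_mod_cast hcoef
  have hsum : ∑ j, P j = ((((m:ℝ) * l / d) : ℝ) : ℂ) • (1 : Matrix (Fin d) (Fin d) ℂ) := by
    have h1 : ∑ j, P j
        = ((((d:ℝ) / ((m:ℝ) * l)) : ℝ) : ℂ)⁻¹ • ((↑((d : ℝ) / (m * l)) : ℂ) • ∑ j, P j) := by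
      rw [inv_smul_smul₀ hcoefC]
    rw [h1, hres]
    congr 1
    rw [← Complex.ofReal_inv]
    congr 1
    rw [inv_div]
  set k : ℝ := ((l:ℝ) * m - d) / d with hkdef
  have hkpos : 0 < k := div_pos hnum hd
  have key : ∑ j ∈ Finset.univ.erase i, P i * P j * P i = ((k : ℝ) : ℂ) • P i := by
    have h1 : ∑ j, P i * P j * P i = P i * (∑ j, P j) * P i := by
      rw [Finset.mul_sum, Finset.sum_mul]
    have h2 : P i * (∑ j, P j) * P i = ((((m:ℝ) * l / d) : ℝ) : ℂ) • P i := by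
      rw [hsum, Matrix.mul_smul, Matrix.smul_mul, mul_one, (hproj i).2]
    have hPi : P i * P i * P i = P i := by rw [(hproj i).2, (hproj i).2]
    have h3 : P i * P i * P i + ∑ j ∈ Finset.univ.erase i, P i * P j * P i
        = ∑ j, P i * P j * P i :=
      Finset.add_sum_erase Finset.univ (fun j => P i * P j * P i) (Finset.mem_univ i)
    have h4 : ∑ j ∈ Finset.univ.erase i, P i * P j * P i
        = ((((m:ℝ) * l / d) : ℝ) : ℂ) • P i - P i := by
      rw [← h2, ← h1, ← h3, hPi]
      abel
    rw [h4]
    have hcoR : (m:ℝ) * l / d = k + 1 := by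
      rw [hkdef]
      field_simp
      ring
    have hco : ((((m:ℝ) * l / d) : ℝ) : ℂ) = ((k : ℝ) : ℂ) + 1 := by
      rw [hcoR]
      push_cast
      ring
    rw [hco, add_smul, one_smul, add_sub_cancel_right]
  -- norms
  set f := Matrix.toEuclideanCLM (𝕜 := ℂ) (n := Fin d) with hfdef
  have hPine : P i ≠ 0 := by
    intro h
    have hr := hrank i
    rw [h, Matrix.rank_zero] at hr
    have : (l:ℝ) = 0 := by exact_mod_cast hr.symm
    rw [this] at hl
    exact lt_irrefl _ hl
  have hAne : f (P i) ≠ 0 := by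
    intro h
    apply hPine
    have := congrArg f.symm h
    simpa using this
  have hA : f (P i) * f (P i) = f (P i) := by rw [← _root_.map_mul, (hproj i).2]
  have hnormPi : 1 ≤ ‖f (P i)‖ := by
    have hpos : 0 < ‖f (P i)‖ := norm_pos_iff.mpr hAne
    have hle : ‖f (P i)‖ ≤ ‖f (P i)‖ * ‖f (P i)‖ := by
      nth_rewrite 1 [← hA]
      exact norm_mul_le _ _
    nlinarith
  by_contra hcon
  push_neg at hcon
  simp only [opNorm] at hcon
  have hne : (Finset.univ.erase i).Nonempty := ⟨j0, Finset.mem_erase.mpr ⟨hj0, Finset.mem_univ j0⟩⟩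
  have hcard : (Finset.univ.erase i).card = m - 1 := by
    simp [Finset.card_erase_of_mem]
  have hsumlt : ∑ j ∈ Finset.univ.erase i, ‖f (P i * P j * P i)‖ < ((m:ℝ) - 1) * c := by
    calc ∑ j ∈ Finset.univ.erase i, ‖f (P i * P j * P i)‖
        < ∑ _j ∈ Finset.univ.erase i, c := by
          apply Finset.sum_lt_sum_of_nonempty hne
          intro j hj
          exact hcon j (Finset.ne_of_mem_erase hj)
      _ = ((m:ℝ) - 1) * c := by
          rw [Finset.sum_const, hcard, nsmul_eq_mul]
          congr 1
          have h1 : 1 ≤ m := by omega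
          push_cast [Nat.cast_sub h1]
          ring
  have hlower : k ≤ ∑ j ∈ Finset.univ.erase i, ‖f (P i * P j * P i)‖ := by
    calc k ≤ k * ‖f (P i)‖ := le_mul_of_one_le_right (le_of_lt hkpos) hnormPi
      _ = ‖f (∑ j ∈ Finset.univ.erase i, P i * P j * P i)‖ := by
          rw [key, _root_.map_smul]
          rw [norm_smul ((k:ℂ)) (f (P i)), Complex.norm_real,
            Real.norm_of_nonneg (le_of_lt hkpos)]
      _ ≤ ∑ j ∈ Finset.univ.erase i, ‖f (P i * P j * P i)‖ := by
          rw [_root_.map_sum]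
          exact norm_sum_le _ _
  have hkeq : k = ((m:ℝ) - 1) * c := by
    rw [hkdef, hcdef]
    have hm1ne : (m:ℝ) - 1 ≠ 0 := (by linarith : (0:ℝ) < (m:ℝ) - 1).ne'
    field_simp
  linarith
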